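/- Let V be a discrete vector field on a finite simplicial complex K arising from a sequence of elementary collapses K = K_n ↘ K_{n−1} ↘ ⋯ ↘ K_0 = {v} (i.e., V consists of the removed free pairs). Then V is a well-defined discrete vector field (each simplex lies in at most one pair), V has no non-trivial closed V-paths, and the only simplex not covered by V is the final vertex v. -/

import Mathlib

open Classical

/-- A finite abstract simplicial complex on vertex type `V`. -/
structure SComplex (V : Type) [DecidableEq V] where
  faces : Finset (Finset V)
  nonempty_of_mem : ∀ s ∈ faces, s.Nonempty
  down_closed : ∀ s ∈ faces, ∀ t, t ⊆ s → t.Nonempty → t ∈ faces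

namespace SComplex

variable {V : Type} [DecidableEq V]

/-- The set entering the discrete-Morse condition at a simplex `σ`:
codimension-one faces `τ ⊂ σ` with `f τ ≥ f σ` together with
codimension-one cofaces `τ ⊃ σ` with `f τ ≤ f σ`. -/
noncomputable def exitSet (K : SComplex V) (f : Finset V → ℝ) (σ : Finset V) :
    Finset (Finset V) :=
  K.faces.filter (fun τ =>
    (τ ⊆ σ ∧ τ.card + 1 = σ.card ∧ f σ ≤ f τ) ∨
    (σ ⊆ τ ∧ σ.card + 1 = τ.card ∧ f τ ≤ f σ))

/-- Forman's discrete Morse condition. -/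
def IsDiscreteMorse (K : SComplex V) (f : Finset V → ℝ) : Prop :=
  ∀ σ ∈ K.faces, (K.exitSet f σ).card ≤ 1

def IsCritical (K : SComplex V) (f : Finset V → ℝ) (σ : Finset V) : Prop :=
  σ ∈ K.faces ∧ K.exitSet f σ = ∅

noncomputable def critSet (K : SComplex V) (f : Finset V → ℝ) : Finset (Finset V) :=
  K.faces.filter (fun σ => K.exitSet f σ = ∅)

/-- total number of critical simplices of `f` -/
noncomputable def critCount (K : SComplex V) (f : Finset V → ℝ) : ℕ :=
  (K.critSet f).card

/-- number of critical `p`-simplices of `f` -/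
noncomputable def critCountDim (K : SComplex V) (f : Finset V → ℝ) (p : ℕ) : ℕ :=
  ((K.critSet f).filter (fun σ => σ.card = p + 1)).card

/-- minimal Morse number -/
noncomputable def M (K : SComplex V) : ℕ :=
  sInf {n | ∃ f, K.IsDiscreteMorse f ∧ K.critCount f = n}

/-- minimal number of critical `k`-simplices -/
noncomputable def mdim (K : SComplex V) (k : ℕ) : ℕ :=
  sInf {n | ∃ f, K.IsDiscreteMorse f ∧ K.critCountDim f k = n}

/-- `σ` is a free face of `τ`. -/
def IsFreePair (K : SComplex V) (σ τ : Finset V) : Prop :=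
  σ ∈ K.faces ∧ τ ∈ K.faces ∧ σ ⊂ τ ∧ ∀ ρ ∈ K.faces, σ ⊂ ρ → ρ = τ

/-- `K'` is obtained from `K` by one elementary collapse. -/
def CollapseStep (K K' : SComplex V) : Prop :=
  ∃ σ τ, K.IsFreePair σ τ ∧ K'.faces = K.faces \ {σ, τ}

def CollapsesTo (K L : SComplex V) : Prop :=
  Relation.ReflTransGen (fun A B => CollapseStep A B) K L

/-- the single-vertex complex -/
def pt (v : V) : SComplex V where
  faces := {{v}}
  nonempty_of_mem := by intro s hs; simp only [Finset.mem_singleton] at hs; subst hs; exact ⟨v, by simp⟩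
  down_closed := by
    intro s hs t hts ht
    simp only [Finset.mem_singleton] at hs ⊢
    subst hs
    rcases (Finset.subset_singleton_iff.mp hts) with h | h
    · exact absurd h (Finset.nonempty_iff_ne_empty.mp ht)
    · exact h

def Collapsible (K : SComplex V) : Prop := ∃ v : V, K.CollapsesTo (pt v)

/-- simple-homotopy equivalence: generated by elementary collapses and expansions -/
def SHEquiv (K L : SComplex V) : Prop :=
  Relation.ReflTransGen (fun A B => CollapseStep A B ∨ CollapseStep B A) K L

/-- a closed non-trivial V-path within a set of (codim-one) pairs -/
def HasClosedVPath (pairs : Set (Finset V × Finset V)) : Prop :=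
  ∃ c : List (Finset V × Finset V), ∃ h : c ≠ [],
    (∀ p ∈ c, p ∈ pairs) ∧
    c.Chain' (fun p q => q.1 ⊆ p.2 ∧ q.1 ≠ p.1) ∧
    (c.head h).1 ⊆ (c.getLast h).2 ∧ (c.head h).1 ≠ (c.getLast h).1

/-- a discrete vector field on `K` -/
structure DVField (K : SComplex V) where
  pairs : Finset (Finset V × Finset V)
  mem₁ : ∀ p ∈ pairs, p.1 ∈ K.faces
  mem₂ : ∀ p ∈ pairs, p.2 ∈ K.faces
  codim : ∀ p ∈ pairs, p.1 ⊆ p.2 ∧ p.1.card + 1 = p.2.card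
  disj : ∀ p ∈ pairs, ∀ q ∈ pairs, p ≠ q →
      p.1 ≠ q.1 ∧ p.1 ≠ q.2 ∧ p.2 ≠ q.1 ∧ p.2 ≠ q.2

/-- the gradient pairs of a discrete Morse function `f` -/
noncomputable def gradPairs (K : SComplex V) (f : Finset V → ℝ) :
    Finset (Finset V × Finset V) :=
  (K.faces ×ˢ K.faces).filter
    (fun p => p.1 ⊆ p.2 ∧ p.1.card + 1 = p.2.card ∧ f p.2 ≤ f p.1)

/-- the sublevel subcomplex `K_α` (Forman's `K(α)`). -/
noncomputable def sublevel (K : SComplex V) (f : Finset V → ℝ) (α : ℝ) : SComplex V where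
  faces := K.faces.filter (fun σ => ∃ τ ∈ K.faces, f τ ≤ α ∧ σ ⊆ τ)
  nonempty_of_mem := fun s hs => K.nonempty_of_mem s (Finset.mem_filter.mp hs).1
  down_closed := by
    intro s hs t hts ht
    rw [Finset.mem_filter] at hs ⊢
    obtain ⟨hsK, τ, hτ, hfτ, hsτ⟩ := hs
    exact ⟨K.down_closed s hsK t hts ht, τ, hτ, hfτ, hts.trans hsτ⟩

/-- a recorded sequence of elementary collapses from `K` to `L`,
listing the removed free pairs in order -/
inductive CollapseSeq : SComplex V → List (Finset V × Finset V) → SComplex V → Prop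
  | nil (K : SComplex V) : CollapseSeq K [] K
  | cons {K K' L : SComplex V} {σ τ : Finset V} {l : List (Finset V × Finset V)} :
      K.IsFreePair σ τ → K'.faces = K.faces \ {σ, τ} →
      CollapseSeq K' l L → CollapseSeq K ((σ, τ) :: l) L

/-- geometric realization of `K` inside `V → ℝ` -/
def realization [Fintype V] (K : SComplex V) : Set (V → ℝ) :=
  {x | (∀ v, 0 ≤ x v) ∧ (∑ v, x v) = 1 ∧ ∃ s ∈ K.faces, ∀ v, x v ≠ 0 → v ∈ s}

end SComplex

private lemma chain_head_le_getLast {α : Type} (f : α → ℕ) (R : α → α → Prop) :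
    ∀ (c : List α) (h : c ≠ []), c.Chain' R →
      (∀ p ∈ c, ∀ q ∈ c, R p q → f p < f q) → f (c.head h) ≤ f (c.getLast h)
  | [a], _, _, _ => le_refl _
  | a :: b :: t, _, hc, hmono => by
      rcases List.isChain_cons_cons.mp hc with ⟨hab, ht⟩
      have hrec := chain_head_le_getLast f R (b :: t) (by simp) ht
        (fun p hp q hq h => hmono p (List.mem_cons_of_mem a hp) q (List.mem_cons_of_mem a hq) h)
      have h1 : f a < f b := hmono a (by simp) b (by simp) hab
      rw [List.head_cons, List.getLast_cons (by simp : (b :: t) ≠ [])]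
      exact le_of_lt (lt_of_lt_of_le h1 (by simpa using hrec))

private lemma indexOf_cons_self' {α : Type} [BEq α] [LawfulBEq α] (a : α) (l : List α) :
    List.idxOf a (a :: l) = 0 := by
  simp [List.idxOf_cons]

private lemma indexOf_cons_ne' {α : Type} [BEq α] [LawfulBEq α] {a b : α} (h : a ≠ b)
    (l : List α) : List.idxOf b (a :: l) = List.idxOf b l + 1 := by
  have hb : (a == b) = false := beq_eq_false_iff_ne.mpr h
  simp [List.idxOf_cons, hb]

private lemma collapseSeq_props {V : Type} [DecidableEq V] {K L : SComplex V}
    {l : List (Finset V × Finset V)} (hseq : SComplex.CollapseSeq K l L) :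
    (∀ p ∈ l, p.1 ∈ K.faces ∧ p.2 ∈ K.faces ∧ p.1 ⊆ p.2 ∧ p.1.card + 1 = p.2.card) ∧
    (∀ s ∈ K.faces, (∀ p ∈ l, s ≠ p.1 ∧ s ≠ p.2) → s ∈ L.faces) ∧
    (∀ p ∈ l, ∀ q ∈ l, p ≠ q → p.1 ≠ q.1 ∧ p.1 ≠ q.2 ∧ p.2 ≠ q.1 ∧ p.2 ≠ q.2) ∧
    (∀ p ∈ l, ∀ q ∈ l, q.1 ⊆ p.2 → q.1 ≠ p.1 → l.idxOf p < l.idxOf q) := by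
  induction hseq with
  | nil K => simp
  | @cons K K' L σ τ l hfree hK' hseq ih =>
    obtain ⟨hσK, hτK, hst, huniq⟩ := hfree
    obtain ⟨ih1, ih2, ih3, ih4⟩ := ih
    -- codimension one for the head pair
    have hcard : σ.card + 1 = τ.card := by
      have hlt : σ.card < τ.card := Finset.card_lt_card hst
      by_contra hne
      have h2 : σ.card + 1 < τ.card := lt_of_le_of_ne hlt hne
      obtain ⟨u, hsu, hut, hcu⟩ := Finset.exists_subsuperset_card_eq hst.subset (n := 1 + σ.card) (by omega) (by omega)
      have hune : u.Nonempty := (K.nonempty_of_mem σ hσK).mono hsu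
      have huK : u ∈ K.faces := K.down_closed τ hτK u hut hune
      have hsu' : σ ⊂ u := hsu.ssubset_of_ne (by
        intro h; rw [← h] at hcu; omega)
      have := huniq u huK hsu'
      rw [this] at hcu; omega
    have hnot : ∀ s ∈ K'.faces, s ≠ σ ∧ s ≠ τ := by
      intro s hs; rw [hK'] at hs
      simp only [Finset.mem_sdiff, Finset.mem_insert, Finset.mem_singleton] at hs
      exact ⟨fun h => hs.2 (Or.inl h), fun h => hs.2 (Or.inr h)⟩
    have hsub : ∀ s ∈ K'.faces, s ∈ K.faces := by
      intro s hs; rw [hK'] at hs; exact (Finset.mem_sdiff.mp hs).1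
    have hmemK' : ∀ p ∈ l, p.1 ∈ K'.faces ∧ p.2 ∈ K'.faces :=
      fun p hp => ⟨(ih1 p hp).1, (ih1 p hp).2.1⟩
    have hnehead : ∀ p ∈ l, p ≠ (σ, τ) := by
      intro p hp h
      exact (hnot p.1 (hmemK' p hp).1).1 (by rw [h])
    refine ⟨?_, ?_, ?_, ?_⟩
    · intro p hp
      rcases List.mem_cons.mp hp with rfl | hp
      · exact ⟨hσK, hτK, hst.subset, hcard⟩
      · obtain ⟨h1, h2, h3, h4⟩ := ih1 p hp
        exact ⟨hsub _ h1, hsub _ h2, h3, h4⟩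
    · intro s hs havoid
      have h0 := havoid (σ, τ) List.mem_cons_self
      have hs' : s ∈ K'.faces := by
        rw [hK']
        simp only [Finset.mem_sdiff, Finset.mem_insert, Finset.mem_singleton]
        exact ⟨hs, fun h => h.elim h0.1 h0.2⟩
      exact ih2 s hs' (fun p hp => havoid p (List.mem_cons_of_mem _ hp))
    · intro p hp q hq hne
      rcases List.mem_cons.mp hp with rfl | hp <;> rcases List.mem_cons.mp hq with rfl | hq
      · exact absurd rfl hne
      · obtain ⟨hq1, hq2⟩ := hmemK' q hq
        have h1 := hnot q.1 hq1
        have h2 := hnot q.2 hq2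
        exact ⟨fun h => h1.1 h.symm, fun h => h2.1 h.symm,
               fun h => h1.2 h.symm, fun h => h2.2 h.symm⟩
      · obtain ⟨hp1, hp2⟩ := hmemK' p hp
        have h1 := hnot p.1 hp1
        have h2 := hnot p.2 hp2
        exact ⟨h1.1, h1.2, h2.1, h2.2⟩
      · exact ih3 p hp q hq hne
    · intro p hp q hq hsub1 hne1
      rcases List.mem_cons.mp hp with rfl | hp <;> rcases List.mem_cons.mp hq with rfl | hq
      · exact absurd rfl hne1
      · have hqh : q ≠ (σ, τ) := hnehead q hq
        rw [indexOf_cons_self', indexOf_cons_ne' (fun h => hqh h.symm) l]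
        omega
      · -- q = (σ,τ), p ∈ l : contradiction since σ ⊆ p.2 ∈ K'
        exfalso
        have hp2 : p.2 ∈ K'.faces := (hmemK' p hp).2
        have hσne : σ.Nonempty := K.nonempty_of_mem σ hσK
        have : σ ∈ K'.faces := K'.down_closed p.2 hp2 σ hsub1 hσne
        exact (hnot σ this).1 rfl
      · have hph : p ≠ (σ, τ) := hnehead p hp
        have hqh : q ≠ (σ, τ) := hnehead q hq
        rw [indexOf_cons_ne' (fun h => hph h.symm) l, indexOf_cons_ne' (fun h => hqh h.symm) l]
        have := ih4 p hp q hq hsub1 hne1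
        omega

/-- the pairs removed along a collapse sequence `K ↘ … ↘ {v}`
form a discrete vector field (each simplex in at most one pair, codimension-one
pairs of faces of `K`), it has no non-trivial closed V-paths, and the only
simplex of `K` not covered by a pair is the final vertex `v`. -/
theorem collapse_sequence_gives_gradient_field {V : Type} [DecidableEq V]
    (K : SComplex V) (v : V) (l : List (Finset V × Finset V))
    (hseq : SComplex.CollapseSeq K l (SComplex.pt v)) :
    (∀ p ∈ l, p.1 ∈ K.faces ∧ p.2 ∈ K.faces ∧ p.1 ⊆ p.2 ∧ p.1.card + 1 = p.2.card) ∧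
    (∀ p ∈ l, ∀ q ∈ l, p ≠ q →
      p.1 ≠ q.1 ∧ p.1 ≠ q.2 ∧ p.2 ≠ q.1 ∧ p.2 ≠ q.2) ∧
    ¬ SComplex.HasClosedVPath {p : Finset V × Finset V | p ∈ l} ∧
    (∀ s ∈ K.faces, (∀ p ∈ l, s ≠ p.1 ∧ s ≠ p.2) → s = {v}) := by
  obtain ⟨h1, h2, h3, h4⟩ := collapseSeq_props hseq
  refine ⟨h1, h3, ?_, ?_⟩
  · rintro ⟨c, h, hmem, hchain, hsubl, hnel⟩
    simp only [Set.mem_setOf_eq] at hmem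
    have hhead : c.head h ∈ l := hmem _ (List.head_mem h)
    have hlast : c.getLast h ∈ l := hmem _ (List.getLast_mem h)
    have hle : l.idxOf (c.head h) ≤ l.idxOf (c.getLast h) :=
      chain_head_le_getLast (fun p => l.idxOf p) _ c h hchain
        (fun p hp q hq hr => h4 p (hmem p hp) q (hmem q hq) hr.1 hr.2)
    have hlt : l.idxOf (c.getLast h) < l.idxOf (c.head h) :=
      h4 _ hlast _ hhead hsubl hnel
    omega
  · intro s hs havoid
    have := h2 s hs havoid
    simpa [SComplex.pt] using this
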